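/- Let 0<q<1, let n≥1 be an integer, let x_1,…,x_n>0, and let p_1,…,p_n≥0 with Σ_{k=1}^n p_k = 1. Write S = Σ_{k=1}^n p_k x_k and E = exp( [ Li₂(1−q^S) − Σ_{k=1}^n p_k Li₂(1−q^{x_k}) ] / log q ). Then [ ((1−q^S)/(1−q))^{S} / ∏_{k=1}^n ((1−q^{x_k})/(1−q))^{p_k x_k} ] · E ≤ Γ_q(S+1) / ∏_{k=1}^n Γ_q(x_k+1)^{p_k} ≤ [ ((1−q^S)/(1−q))^{S+1/2} / ∏_{k=1}^n ((1−q^{x_k})/(1−q))^{p_k(x_k+1/2)} ] · E. -/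

import Mathlib

/-- The `q`-gamma function for `0 < q < 1`:
`Γ_q(x) = (1−q)^(1−x) ∏_{j=0}^∞ (1−q^(j+1))/(1−q^(j+x))`. -/
noncomputable def qGamma (q x : ℝ) : ℝ :=
  (1 - q) ^ (1 - x) * ∏' j : ℕ, (1 - q ^ (j + 1)) / (1 - q ^ ((j : ℝ) + x))

/-- The dilogarithm `Li₂(z) = −∫₀^z log(1−t)/t dt`. -/
noncomputable def dilog (z : ℝ) : ℝ := -∫ t in (0:ℝ)..z, Real.log (1 - t) / t

open Real MeasureTheory intervalIntegral Filter Topology Set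

namespace QJ

lemma neg_log_one_sub_le {r : ℝ} (h0 : 0 ≤ r) (h1 : r < 1) :
    -Real.log (1 - r) ≤ r / (1 - r) := by
  have h2 : (0:ℝ) < 1 - r := by linarith
  have := Real.log_le_sub_one_of_pos (x := (1 - r)⁻¹) (by positivity)
  rw [Real.log_inv] at this
  have : -Real.log (1 - r) ≤ (1-r)⁻¹ - 1 := by linarith
  calc -Real.log (1-r) ≤ (1-r)⁻¹ - 1 := this
    _ = r / (1-r) := by field_simp; ring

lemma g_meas : Measurable (fun t : ℝ => Real.log (1 - t) / t) :=
  (Real.measurable_log.comp (measurable_const.sub measurable_id)).div measurable_id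

lemma g_bound {z t : ℝ} (ht0 : 0 < t) (htz : t ≤ z) (hz : z < 1) :
    ‖Real.log (1 - t) / t‖ ≤ 1 / (1 - z) := by
  have ht1 : t < 1 := lt_of_le_of_lt htz hz
  have h1t : (0:ℝ) < 1 - t := by linarith
  have h1z : (0:ℝ) < 1 - z := by linarith
  have hlogle : Real.log (1 - t) ≤ 0 := Real.log_nonpos (by linarith) (by linarith)
  have h2 : -Real.log (1 - t) ≤ t / (1 - t) := neg_log_one_sub_le ht0.le ht1
  rw [Real.norm_eq_abs, abs_div, abs_of_nonpos hlogle, abs_of_pos ht0]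
  rw [div_le_div_iff₀ ht0 h1z]
  have h3 : -Real.log (1-t) * (1-z) ≤ (t/(1-t)) * (1-z) := by
    apply mul_le_mul_of_nonneg_right h2 h1z.le
  refine h3.trans ?_
  rw [div_mul_eq_mul_div, div_le_iff₀ h1t]
  nlinarith

lemma g_intervalIntegrable {z : ℝ} (hz0 : 0 ≤ z) (hz1 : z < 1) :
    IntervalIntegrable (fun t => Real.log (1 - t) / t) volume 0 z := by
  rw [intervalIntegrable_iff_integrableOn_Ioc_of_le hz0]
  apply Measure.integrableOn_of_bounded (M := 1 / (1 - z))
  · exact (measure_Ioc_lt_top).ne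
  · exact g_meas.aestronglyMeasurable
  · filter_upwards [ae_restrict_mem measurableSet_Ioc] with t ht
    exact g_bound ht.1 ht.2 hz1

lemma hasDerivAt_dilog {z : ℝ} (hz0 : 0 < z) (hz1 : z < 1) :
    HasDerivAt dilog (-(Real.log (1 - z) / z)) z := by
  have hcont : ContinuousAt (fun t => Real.log (1 - t) / t) z := by
    apply ContinuousAt.div
    · exact (Real.continuousAt_log (by linarith)).comp
        ((continuous_const.sub continuous_id).continuousAt)
    · exact continuousAt_id
    · exact hz0.ne'
  have h := integral_hasDerivAt_right (f := fun t => Real.log (1 - t) / t) (a := 0) (b := z)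
    (g_intervalIntegrable hz0.le hz1)
    (g_meas.stronglyMeasurable.stronglyMeasurableAtFilter)
    hcont
  exact h.neg



lemma hasSum_dilog {w : ℝ} (hw0 : 0 ≤ w) (hw1 : w < 1) :
    HasSum (fun m : ℕ => w ^ (m + 1) / ((m : ℝ) + 1) ^ 2) (dilog w) := by
  -- partial sums F N t = ∑_{m < N} t^m/(m+1)
  set F : ℕ → ℝ → ℝ := fun N t => ∑ m ∈ Finset.range N, t ^ m / ((m : ℝ) + 1) with hF
  have hsummable : Summable (fun m : ℕ => w ^ (m + 1) / ((m : ℝ) + 1) ^ 2) := by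
    apply Summable.of_nonneg_of_le (fun m => by positivity) (fun m => ?_)
      (Summable.mul_left w (summable_geometric_of_lt_one hw0 hw1))
    have h1 : (1:ℝ) ≤ ((m:ℝ)+1)^2 := by nlinarith [Nat.cast_nonneg (α := ℝ) m]
    calc w ^ (m+1) / ((m:ℝ)+1)^2 ≤ w ^ (m+1) / 1 := by
          apply div_le_div_of_nonneg_left (by positivity) one_pos h1
      _ = w * w ^ m := by rw [div_one, pow_succ, mul_comm]
  rw [hsummable.hasSum_iff_tendsto_nat]
  -- ∫_0^w F N = partial sum
  have hint : ∀ N, ∫ t in (0:ℝ)..w, F N t = ∑ m ∈ Finset.range N, w ^ (m+1) / ((m:ℝ)+1)^2 := by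
    intro N
    rw [hF]
    rw [intervalIntegral.integral_finset_sum]
    · apply Finset.sum_congr rfl
      intro m _
      rw [intervalIntegral.integral_div, integral_pow]
      rw [zero_pow (by omega), sub_zero]
      rw [div_div]
      congr 1
      push_cast
      ring
    · intro m _
      apply IntervalIntegrable.div_const
      exact (continuous_pow m).intervalIntegrable _ _
  have key : Tendsto (fun N => ∫ t in (0:ℝ)..w, F N t) atTop (𝓝 (dilog w)) := by
    have : dilog w = ∫ t in (0:ℝ)..w, -(Real.log (1 - t) / t) := by
      rw [dilog, intervalIntegral.integral_neg]
    rw [this]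
    apply intervalIntegral.tendsto_integral_filter_of_dominated_convergence
      (bound := fun _ => 1 / (1 - w))
    · filter_upwards with N
      apply Continuous.aestronglyMeasurable
      exact continuous_finset_sum _ (fun m _ => (continuous_pow m).div_const _)
    · filter_upwards with N
      refine ae_of_all _ (fun t ht => ?_)
      rw [Set.uIoc_of_le hw0] at ht
      have ht0 : 0 < t := ht.1
      have htw : t ≤ w := ht.2
      have h1w : (0:ℝ) < 1 - w := by linarith
      rw [Real.norm_eq_abs, abs_of_nonneg (by positivity)]
      have hb : F N t ≤ ∑ m ∈ Finset.range N, t ^ m := by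
        apply Finset.sum_le_sum
        intro m _
        rw [div_le_iff₀ (by positivity)]
        nlinarith [pow_nonneg ht0.le m, Nat.cast_nonneg (α := ℝ) m, pow_nonneg ht0.le m]
      have hg : ∑ m ∈ Finset.range N, t ^ m ≤ (1 - t)⁻¹ := by
        have hs := Summable.sum_le_tsum (Finset.range N) (fun m _ => pow_nonneg ht0.le m)
          (summable_geometric_of_lt_one ht0.le (by linarith : t < 1))
        rwa [tsum_geometric_of_lt_one ht0.le (by linarith)] at hs
      calc F N t ≤ (1-t)⁻¹ := hb.trans hg
        _ ≤ 1/(1-w) := by rw [one_div]; apply inv_anti₀ h1w; linarith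
    · exact intervalIntegrable_const
    · refine ae_of_all _ (fun t ht => ?_)
      rw [Set.uIoc_of_le hw0] at ht
      have ht0 : 0 < t := ht.1
      have ht1 : t < 1 := lt_of_le_of_lt ht.2 hw1
      have hl : HasSum (fun m : ℕ => t ^ (m+1) / ((m:ℝ)+1)) (-Real.log (1 - t)) := by
        have := Real.hasSum_pow_div_log_of_abs_lt_one (x := t) (by rw [abs_of_pos ht0]; exact ht1)
        convert this using 2
      have hl2 : HasSum (fun m : ℕ => t ^ m / ((m:ℝ)+1)) (-(Real.log (1 - t) / t)) := by
        have h2 := hl.div_const t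
        rw [neg_div] at h2
        refine h2.congr_fun (fun m => ?_)
        rw [pow_succ, mul_div_assoc]
        field_simp
      exact hl2.tendsto_sum_nat
  have := key
  simp_rw [hint] at this
  exact this



/-- The function in the reflection identity. -/
noncomputable def Phi (w : ℝ) : ℝ := dilog (1 - w) + Real.log w * Real.log (1 - w) + dilog w

lemma hasDerivAt_Phi {w : ℝ} (h0 : 0 < w) (h1 : w < 1) : HasDerivAt Phi 0 w := by
  have hw1 : (0:ℝ) < 1 - w := by linarith
  have h1' : HasDerivAt (fun w => dilog (1 - w)) (Real.log w / (1 - w)) w := by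
    have hd := hasDerivAt_dilog (z := 1 - w) hw1 (by linarith)
    have hc : HasDerivAt (fun w : ℝ => 1 - w) (-1) w := by
      simpa using (hasDerivAt_id w).const_sub 1
    have := hd.comp w hc
    refine this.congr_deriv (Eq.symm ?_)
    have : 1 - (1 - w) = w := by ring
    rw [this]
    field_simp
  have h2' : HasDerivAt (fun w : ℝ => Real.log w * Real.log (1 - w))
      (Real.log (1 - w) / w - Real.log w / (1 - w)) w := by
    have ha : HasDerivAt Real.log w⁻¹ w := Real.hasDerivAt_log h0.ne'
    have hb : HasDerivAt (fun w : ℝ => Real.log (1 - w)) (-(1-w)⁻¹) w := by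
      have hc : HasDerivAt (fun w : ℝ => 1 - w) (-1) w := by
        simpa using (hasDerivAt_id w).const_sub 1
      have := (Real.hasDerivAt_log hw1.ne').comp w hc
      refine this.congr_deriv (Eq.symm ?_)
      ring
    have := ha.mul hb
    refine this.congr_deriv (Eq.symm ?_)
    field_simp
    ring
  have h3' : HasDerivAt dilog (-(Real.log (1 - w) / w)) w := hasDerivAt_dilog h0 h1
  have := (h1'.add h2').add h3'
  refine this.congr_deriv (Eq.symm ?_)
  ring

lemma Phi_constant {w : ℝ} (h0 : 0 < w) (h1 : w < 1) : Phi w = Phi (1/2) := by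
  have key : ∀ a b : ℝ, 0 < a → a ≤ b → b < 1 → Phi b = Phi a := by
    intro a b ha hab hb1
    apply constant_of_has_deriv_right_zero (f := Phi) (a := a) (b := b)
    · intro t ht
      have ht0 : 0 < t := lt_of_lt_of_le ha ht.1
      have ht1 : t < 1 := lt_of_le_of_lt ht.2 hb1
      exact (hasDerivAt_Phi ht0 ht1).continuousAt.continuousWithinAt
    · intro t ht
      have ht0 : 0 < t := lt_of_lt_of_le ha ht.1
      have ht1 : t < 1 := lt_of_lt_of_le ht.2 hb1.le
      exact (hasDerivAt_Phi ht0 ht1).hasDerivWithinAt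
    · exact ⟨hab, le_refl b⟩
  rcases le_total w (1/2) with h | h
  · exact (key w (1/2) h0 h (by norm_num)).symm
  · exact key (1/2) w (by norm_num) h h1

lemma dilog_reflection {w : ℝ} (h0 : 0 < w) (h1 : w < 1) :
    dilog (1 - w) = Phi (1/2) - Real.log w * Real.log (1 - w) - dilog w := by
  have := Phi_constant h0 h1
  rw [Phi] at this
  linarith



lemma psi1 {s : ℝ} (hs : 0 ≤ s) : s * exp (-s) ≤ 1 - exp (-s) := by
  have h := Real.add_one_le_exp s
  have he : 0 < exp (-s) := exp_pos _
  have key : (s + 1) * exp (-s) ≤ exp s * exp (-s) :=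
    mul_le_mul_of_nonneg_right h he.le
  rw [← Real.exp_add] at key
  simp only [add_neg_cancel, Real.exp_zero] at key
  linarith

lemma psi2_aux : ∀ s : ℝ, 0 ≤ s → 2 * (exp s - 1) ≤ s * (exp s + 1) := by
  -- φ(s) = (s-1)exp s + 1 ≥ 0 on [0,∞), then ψ(s) = s(exp s+1) - 2(exp s -1) ≥ 0
  have hphi : ∀ s : ℝ, 0 ≤ s → 0 ≤ (s - 1) * exp s + 1 := by
    set φ : ℝ → ℝ := fun s => (s - 1) * exp s + 1 with hφ
    have hd : ∀ s : ℝ, HasDerivAt φ (s * exp s) s := by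
      intro s
      have := ((hasDerivAt_id s).sub_const 1).mul (Real.hasDerivAt_exp s)
      refine (this.add_const 1).congr_deriv (Eq.symm ?_)
      simp [id]
      ring
    have hmono : MonotoneOn φ (Ici (0:ℝ)) := by
      apply monotoneOn_of_deriv_nonneg (convex_Ici 0)
      · exact fun s _ => (hd s).continuousAt.continuousWithinAt
      · exact fun s _ => (hd s).differentiableAt.differentiableWithinAt
      · intro s hs
        rw [interior_Ici] at hs
        rw [(hd s).deriv]
        exact mul_nonneg (le_of_lt hs) (exp_pos s).le
    intro s hs
    have := hmono (self_mem_Ici) hs hs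
    simpa [hφ] using this
  set ψ : ℝ → ℝ := fun s => s * (exp s + 1) - 2 * (exp s - 1) with hψ
  have hd : ∀ s : ℝ, HasDerivAt ψ ((s - 1) * exp s + 1) s := by
    intro s
    have h1 := (hasDerivAt_id s).mul ((Real.hasDerivAt_exp s).add_const 1)
    have h2 := ((Real.hasDerivAt_exp s).sub_const 1).const_mul 2
    refine (h1.sub h2).congr_deriv (Eq.symm ?_)
    simp [id]
    ring
  have hmono : MonotoneOn ψ (Ici (0:ℝ)) := by
    apply monotoneOn_of_deriv_nonneg (convex_Ici 0)
    · exact fun s _ => (hd s).continuousAt.continuousWithinAt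
    · exact fun s _ => (hd s).differentiableAt.differentiableWithinAt
    · intro s hs
      rw [interior_Ici] at hs
      rw [(hd s).deriv]
      exact hphi s (le_of_lt hs)
  intro s hs
  have := hmono (self_mem_Ici) hs hs
  simp only [hψ] at this
  simp only [Real.exp_zero] at this
  linarith

lemma psi2 {s : ℝ} (hs : 0 < s) : 1 / s ≤ exp (-s) / (1 - exp (-s)) + 1 / 2 := by
  set y := exp (-s) with hy
  have hy0 : 0 < y := exp_pos _
  have hy1 : y < 1 := by
    rw [hy]
    have : -s < 0 := by linarith
    calc exp (-s) < exp 0 := Real.exp_lt_exp.mpr this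
      _ = 1 := Real.exp_zero
  have h1y : (0:ℝ) < 1 - y := by linarith
  have key : 2 * (1 - y) ≤ s * (1 + y) := by
    have h := psi2_aux s hs.le
    have hm : 2 * (exp s - 1) * exp (-s) ≤ s * (exp s + 1) * exp (-s) :=
      mul_le_mul_of_nonneg_right h (exp_pos _).le
    have he : exp s * exp (-s) = 1 := by rw [← Real.exp_add]; simp
    nlinarith [he]
  have h2 : 1 / s ≤ (1 + y) / (2 * (1 - y)) := by
    rw [div_le_div_iff₀ hs (by linarith)]
    linarith
  refine h2.trans (le_of_eq ?_)
  field_simp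
  ring



lemma hasSum_neg_log {r : ℝ} (h0 : 0 ≤ r) (h1 : r < 1) :
    HasSum (fun m : ℕ => r ^ (m+1) / ((m:ℝ)+1)) (-Real.log (1-r)) := by
  have := Real.hasSum_pow_div_log_of_abs_lt_one (x := r) (by rwa [abs_of_nonneg h0])
  convert this using 2

lemma neg_log_one_sub_nonneg {r : ℝ} (h0 : 0 ≤ r) (h1 : r < 1) :
    0 ≤ -Real.log (1 - r) := by
  have := Real.log_nonpos (by linarith) (by linarith : 1 - r ≤ 1)
  linarith

section Fixedq
variable {q : ℝ} (hq0 : 0 < q) (hq1 : q < 1)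

include hq0 in
lemma rpow_pos' (y : ℝ) : 0 < q ^ y := Real.rpow_pos_of_pos hq0 y

include hq0 hq1 in
lemma rpow_lt_one' {y : ℝ} (hy : 0 < y) : q ^ y < 1 :=
  Real.rpow_lt_one hq0.le hq1 hy

include hq0 hq1 in
lemma pow_lt_one' (m : ℕ) : q ^ (m + 1) < 1 :=
  pow_lt_one₀ hq0.le hq1 (by omega)

set_option maxHeartbeats 1000000 in
include hq0 hq1 in
lemma tsum_ell_swap {c : ℝ} (hc : 0 < c) :
    (Summable fun j : ℕ => -Real.log (1 - q ^ ((j:ℝ) + c))) ∧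
    ∑' j : ℕ, -Real.log (1 - q ^ ((j:ℝ) + c))
      = ∑' m : ℕ, q ^ (c * ((m:ℝ)+1)) / (((m:ℝ)+1) * (1 - q ^ (m+1))) := by
  set f : ℕ × ℕ → ℝ := fun jm => (q ^ ((jm.1:ℝ) + c)) ^ (jm.2 + 1) / ((jm.2:ℝ)+1) with hf
  have hr : ∀ j : ℕ, 0 < q ^ ((j:ℝ) + c) := fun j => rpow_pos' hq0 _
  have hr1 : ∀ j : ℕ, q ^ ((j:ℝ) + c) < 1 := fun j =>
    rpow_lt_one' hq0 hq1 (by positivity)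
  have hfs : ∀ j : ℕ, HasSum (fun m => f (j, m)) (-Real.log (1 - q ^ ((j:ℝ) + c))) :=
    fun j => hasSum_neg_log (hr j).le (hr1 j)
  have hbound : ∀ j : ℕ, -Real.log (1 - q ^ ((j:ℝ) + c)) ≤ (q ^ c / (1 - q ^ c)) * q ^ j := by
    intro j
    have h1 : q ^ ((j:ℝ) + c) = q ^ j * q ^ c := by
      rw [Real.rpow_add hq0, Real.rpow_natCast]
    have hqc1 : q ^ c < 1 := rpow_lt_one' hq0 hq1 hc
    have hqc0 : 0 < q ^ c := rpow_pos' hq0 c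
    have hj1 : q ^ j ≤ 1 := pow_le_one₀ hq0.le hq1.le
    have h2 : q ^ ((j:ℝ) + c) ≤ q ^ c := by
      rw [h1]; nlinarith
    calc -Real.log (1 - q ^ ((j:ℝ) + c)) ≤ q ^ ((j:ℝ)+c) / (1 - q ^ ((j:ℝ)+c)) :=
          neg_log_one_sub_le (hr j).le (hr1 j)
      _ ≤ (q ^ j * q ^ c) / (1 - q ^ c) := by
          rw [h1]
          apply div_le_div_of_nonneg_left ?_ (by linarith) (by rw [← h1]; linarith)
          · positivity
      _ = (q ^ c / (1 - q ^ c)) * q ^ j := by ring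
  have hsumj : Summable (fun j : ℕ => -Real.log (1 - q ^ ((j:ℝ) + c))) := by
    apply Summable.of_nonneg_of_le
      (fun j => neg_log_one_sub_nonneg (hr j).le (hr1 j)) hbound
    exact (summable_geometric_of_lt_one hq0.le hq1).mul_left _
  have hfnonneg : 0 ≤ f := by
    intro jm
    have := (hr jm.1).le
    positivity
  have hsummable : Summable f := by
    apply (summable_prod_of_nonneg hfnonneg).mpr
    constructor
    · exact fun j => (hfs j).summable
    · apply Summable.congr hsumj
      intro j
      exact ((hfs j).tsum_eq).symm
  have hswap : ∑' j : ℕ, ∑' m : ℕ, f (j, m) = ∑' m : ℕ, ∑' j : ℕ, f (j, m) :=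
    (Summable.tsum_comm (f := fun j m => f (j, m)) hsummable).symm
  have hleft : ∑' j : ℕ, ∑' m : ℕ, f (j, m) = ∑' j : ℕ, -Real.log (1 - q ^ ((j:ℝ) + c)) :=
    tsum_congr fun j => (hfs j).tsum_eq
  have hinner : ∀ m : ℕ, ∑' j : ℕ, f (j, m)
      = q ^ (c * ((m:ℝ)+1)) / (((m:ℝ)+1) * (1 - q ^ (m+1))) := by
    intro m
    have hterm : ∀ j : ℕ, f (j, m)
        = (q ^ (c * ((m:ℝ)+1)) / ((m:ℝ)+1)) * (q ^ (m+1)) ^ j := by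
      intro j
      rw [hf]
      simp only
      have h1 : (q ^ ((j:ℝ) + c)) ^ (m + 1) = q ^ (((j:ℝ) + c) * ((m:ℝ)+1)) := by
        rw [Real.rpow_mul hq0.le]
        rw [show ((m:ℝ)+1) = ((m+1 : ℕ) : ℝ) by push_cast; ring]
        rw [Real.rpow_natCast]
      rw [h1]
      have h2 : ((j:ℝ) + c) * ((m:ℝ)+1) = (j:ℝ) * ((m:ℝ)+1) + c * ((m:ℝ)+1) := by ring
      rw [h2, Real.rpow_add hq0]
      have h3 : q ^ ((j:ℝ) * ((m:ℝ)+1)) = (q ^ (m+1)) ^ j := by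
        rw [show (j:ℝ) * ((m:ℝ)+1) = ((j * (m+1) : ℕ) : ℝ) by push_cast; ring]
        rw [Real.rpow_natCast, pow_mul, ← pow_mul, Nat.mul_comm, pow_mul]
      rw [h3]
      ring
    calc ∑' j : ℕ, f (j, m) = ∑' j : ℕ, (q ^ (c * ((m:ℝ)+1)) / ((m:ℝ)+1)) * (q ^ (m+1)) ^ j :=
          tsum_congr hterm
      _ = (q ^ (c * ((m:ℝ)+1)) / ((m:ℝ)+1)) * (1 - q ^ (m+1))⁻¹ := by
          rw [tsum_mul_left, tsum_geometric_of_lt_one (by positivity) (pow_lt_one' hq0 hq1 m)]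
      _ = q ^ (c * ((m:ℝ)+1)) / (((m:ℝ)+1) * (1 - q ^ (m+1))) := by
          have hm1 : (0:ℝ) < (m:ℝ) + 1 := by positivity
          have hy1 : q ^ (m+1) < 1 := pow_lt_one' hq0 hq1 m
          field_simp
  refine ⟨hsumj, ?_⟩
  rw [← hleft, hswap]
  exact tsum_congr hinner

end Fixedq


noncomputable def Ec (q : ℝ) (m : ℕ) (y : ℝ) : ℝ := q ^ (y * ((m:ℝ) + 1))
noncomputable def Ac (q : ℝ) (m : ℕ) : ℝ := q ^ (m+1) / (((m:ℝ) + 1) * (1 - q ^ (m+1)))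
noncomputable def Bc (q : ℝ) (m : ℕ) : ℝ := 1 / (((m:ℝ) + 1) ^ 2 * (-Real.log q))
noncomputable def Hc (m : ℕ) : ℝ := 1 / (2 * ((m:ℝ) + 1))
noncomputable def T0 (q : ℝ) : ℝ := ∑' j : ℕ, -Real.log (1 - q ^ (j+1))

section Fixedq
variable {q : ℝ} (hq0 : 0 < q) (hq1 : q < 1)

include hq0 hq1 in
lemma pow_lt_one'' (m : ℕ) : q ^ (m + 1) < 1 := pow_lt_one₀ hq0.le hq1 (by omega)

include hq0 hq1 in
lemma logq_neg : Real.log q < 0 := Real.log_neg hq0 hq1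

include hq0 in
lemma Ec_eq_pow (m : ℕ) (y : ℝ) : Ec q m y = (q ^ y) ^ (m+1) := by
  rw [Ec, show ((m:ℝ)+1) = ((m+1 : ℕ) : ℝ) by push_cast; ring,
    Real.rpow_mul hq0.le, Real.rpow_natCast]

include hq0 in
lemma Ec_pos (m : ℕ) (y : ℝ) : 0 < Ec q m y := Real.rpow_pos_of_pos hq0 _

include hq0 hq1 in
lemma qy_mem {y : ℝ} (hy : 0 < y) : 0 < q ^ y ∧ q ^ y < 1 :=
  ⟨Real.rpow_pos_of_pos hq0 y, Real.rpow_lt_one hq0.le hq1 hy⟩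

-- summabilities
include hq0 hq1 in
lemma summable_AEc {y : ℝ} (hy : 0 ≤ y) : Summable (fun m => Ac q m * Ec q m y) := by
  apply Summable.of_nonneg_of_le (g := fun m => Ac q m * Ec q m y)
    (f := fun m => (q / (1 - q)) * q ^ m)
  · intro m
    have h1 : q ^ (m+1) < 1 := pow_lt_one'' hq0 hq1 m
    have h2 : (0:ℝ) < q ^ (m+1) := by positivity
    have h3 : (0:ℝ) < (m:ℝ)+1 := by positivity
    have hden : (0:ℝ) < ((m:ℝ)+1) * (1 - q ^ (m+1)) :=
      mul_pos (by positivity) (by linarith)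
    have hA : 0 ≤ Ac q m := by
      rw [Ac]; exact div_nonneg (by positivity) hden.le
    exact mul_nonneg hA (Ec_pos hq0 m y).le
  · intro m
    have h1 : q ^ (m+1) < 1 := pow_lt_one'' hq0 hq1 m
    have h1q : (0:ℝ) < 1 - q := by linarith
    have h2 : (0:ℝ) < q ^ (m+1) := by positivity
    have h3 : (1:ℝ) ≤ (m:ℝ)+1 := by simp [Nat.cast_nonneg]
    have h4 : 1 - q ≤ ((m:ℝ)+1) * (1 - q ^ (m+1)) := by
      have : q ^ (m+1) ≤ q := by
        calc q ^ (m+1) ≤ q ^ 1 := pow_le_pow_of_le_one hq0.le hq1.le (by omega)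
          _ = q := pow_one q
      nlinarith
    have hE1 : Ec q m y ≤ 1 := by
      rw [Ec]
      apply Real.rpow_le_one hq0.le hq1.le (by positivity)
    have hAc : Ac q m ≤ q ^ (m+1) / (1 - q) := by
      rw [Ac]
      apply div_le_div_of_nonneg_left h2.le h1q h4
    calc Ac q m * Ec q m y ≤ (q ^ (m+1) / (1-q)) * 1 := by
          apply mul_le_mul hAc hE1 (Ec_pos hq0 m y).le (by positivity)
      _ = (q / (1-q)) * q ^ m := by rw [mul_one, pow_succ]; ring
  · exact (summable_geometric_of_lt_one hq0.le hq1).mul_left _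

include hq0 hq1 in
lemma summable_geomEc {y : ℝ} (hy : 0 < y) : Summable (fun m => (q ^ y) ^ (m+1)) := by
  obtain ⟨h0, h1⟩ := qy_mem hq0 hq1 hy
  have := (summable_geometric_of_lt_one h0.le h1).mul_left (q ^ y)
  apply this.congr
  intro m
  rw [pow_succ]
  ring

include hq0 hq1 in
lemma summable_BEc {y : ℝ} (hy : 0 < y) : Summable (fun m => Bc q m * Ec q m y) := by
  have hu : 0 < -Real.log q := by have := logq_neg hq0 hq1; linarith
  apply Summable.of_nonneg_of_le (g := fun m => Bc q m * Ec q m y)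
    (f := fun m => (1 / (-Real.log q)) * (q ^ y) ^ (m+1))
  · intro m
    have h3 : (0:ℝ) < (m:ℝ)+1 := by positivity
    have := (Ec_pos hq0 (q := q) m y).le
    have : 0 ≤ Bc q m := by rw [Bc]; positivity
    positivity
  · intro m
    have h3 : (1:ℝ) ≤ ((m:ℝ)+1) := by simp [Nat.cast_nonneg]
    have h4 : (1:ℝ) ≤ ((m:ℝ)+1)^2 := by nlinarith
    have hBc : Bc q m ≤ 1 / (-Real.log q) := by
      rw [Bc]
      apply div_le_div_of_nonneg_left one_pos.le hu
      nlinarith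
    rw [Ec_eq_pow hq0]
    apply mul_le_mul_of_nonneg_right hBc
    positivity
  · exact (summable_geomEc hq0 hq1 hy).mul_left _

include hq0 hq1 in
lemma summable_HEc {y : ℝ} (hy : 0 < y) : Summable (fun m => Hc m * Ec q m y) := by
  apply Summable.of_nonneg_of_le (g := fun m => Hc m * Ec q m y)
    (f := fun m => (q ^ y) ^ (m+1))
  · intro m
    have h3 : (0:ℝ) < (m:ℝ)+1 := by positivity
    have := (Ec_pos hq0 (q := q) m y).le
    have : 0 ≤ Hc m := by rw [Hc]; positivity
    positivity
  · intro m
    have h3 : (1:ℝ) ≤ ((m:ℝ)+1) := by simp [Nat.cast_nonneg]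
    have hH : Hc m ≤ 1 := by
      rw [Hc]
      rw [div_le_one (by positivity)]
      nlinarith
    rw [Ec_eq_pow hq0]
    calc Hc m * (q ^ y) ^ (m+1) ≤ 1 * (q ^ y) ^ (m+1) := by
          apply mul_le_mul_of_nonneg_right hH (by positivity)
      _ = (q ^ y) ^ (m+1) := one_mul _
  · exact summable_geomEc hq0 hq1 hy

-- sign lemmas
include hq0 hq1 in
lemma Ac_le_Bc (m : ℕ) : Ac q m ≤ Bc q m := by
  have hu : 0 < -Real.log q := by have := logq_neg hq0 hq1; linarith
  set u := -Real.log q with hu'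
  set s := ((m:ℝ)+1) * u with hs'
  have hm1 : (0:ℝ) < (m:ℝ)+1 := by positivity
  have hs : 0 < s := by positivity
  have hq_exp : q ^ (m+1) = exp (-s) := by
    rw [← Real.exp_log (show (0:ℝ) < q ^ (m+1) by positivity), Real.log_pow]
    congr 1
    rw [hs', hu']
    push_cast
    ring
  have h1 := psi1 hs.le
  rw [Ac, Bc, hq_exp, ← hu']
  have hden : 0 < 1 - exp (-s) := by
    have : exp (-s) < 1 := by
      rw [← Real.exp_zero]
      exact Real.exp_lt_exp.mpr (by linarith)
    linarith
  rw [div_le_div_iff₀ (by positivity) (by positivity)]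
  have : ((m:ℝ)+1)^2 * u = ((m:ℝ)+1) * s := by rw [hs']; ring
  rw [this]
  have := mul_le_mul_of_nonneg_left h1 hm1.le
  nlinarith
include hq0 hq1 in
lemma Bc_le_Ac_add_Hc (m : ℕ) : Bc q m ≤ Ac q m + Hc m := by
  have hu : 0 < -Real.log q := by have := logq_neg hq0 hq1; linarith
  set u := -Real.log q with hu'
  set s := ((m:ℝ)+1) * u with hs'
  have hm1 : (0:ℝ) < (m:ℝ)+1 := by positivity
  have hs : 0 < s := by positivity
  have hq_exp : q ^ (m+1) = exp (-s) := by
    rw [← Real.exp_log (show (0:ℝ) < q ^ (m+1) by positivity), Real.log_pow]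
    congr 1
    rw [hs', hu']
    push_cast
    ring
  have h2 := psi2 hs
  have hden : 0 < 1 - exp (-s) := by
    have : exp (-s) < 1 := by
      rw [← Real.exp_zero]
      exact Real.exp_lt_exp.mpr (by linarith)
    linarith
  rw [Ac, Bc, Hc, hq_exp, ← hu']
  have e1 : 1 / (((m:ℝ)+1)^2 * u) = (1/s) * (1/((m:ℝ)+1)) := by
    rw [hs']; field_simp
  have e2 : exp (-s) / (((m:ℝ)+1) * (1 - exp (-s)))
      = (exp (-s)/(1 - exp (-s))) * (1/((m:ℝ)+1)) := by
    field_simp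
  have e3 : 1 / (2 * ((m:ℝ)+1)) = (1/2) * (1/((m:ℝ)+1)) := by
    field_simp
  rw [e1, e2, e3, ← add_mul]
  apply mul_le_mul_of_nonneg_right h2
  positivity

end Fixedq


section Fixedq
variable {q : ℝ} (hq0 : 0 < q) (hq1 : q < 1)

include hq0 hq1 in
lemma qGamma_eq {x : ℝ} (hx : 0 < x) :
    qGamma q (x + 1) = Real.exp (-(x * Real.log (1-q))
      + ((∑' m : ℕ, Ac q m * Ec q m x) - T0 q)) := by
  have h1q : (0:ℝ) < 1 - q := by linarith
  have hden : ∀ j : ℕ, 0 < 1 - q ^ ((j:ℝ) + (x+1)) := fun j => by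
    have := Real.rpow_lt_one hq0.le hq1 (show (0:ℝ) < (j:ℝ) + (x+1) by positivity)
    linarith
  have hnum : ∀ j : ℕ, 0 < 1 - q ^ (j+1) := fun j => by
    have := pow_lt_one'' hq0 hq1 j; linarith
  have hs1 : Summable (fun j : ℕ => -Real.log (1 - q ^ ((j:ℝ) + (x+1)))) :=
    (tsum_ell_swap hq0 hq1 (show (0:ℝ) < x + 1 by linarith)).1
  have hconv : ∀ j : ℕ, q ^ ((j:ℝ) + 1) = q ^ (j+1) := fun j => by
    rw [show ((j:ℝ)+1) = ((j+1 : ℕ):ℝ) by push_cast; ring, Real.rpow_natCast]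
  have hs2 : Summable (fun j : ℕ => -Real.log (1 - q ^ (j+1))) := by
    have := (tsum_ell_swap hq0 hq1 (show (0:ℝ) < 1 by norm_num)).1
    apply this.congr; intro j; rw [hconv j]
  have hlog : ∀ j : ℕ, Real.log ((1 - q ^ (j+1)) / (1 - q ^ ((j:ℝ) + (x+1))))
      = (-Real.log (1 - q ^ ((j:ℝ) + (x+1)))) - (-Real.log (1 - q ^ (j+1))) := fun j => by
    rw [Real.log_div (hnum j).ne' (hden j).ne']; ring
  have hslog : Summable (fun j : ℕ => Real.log ((1 - q ^ (j+1)) / (1 - q ^ ((j:ℝ) + (x+1))))) := by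
    apply Summable.congr (hs1.sub hs2)
    intro j; rw [hlog j]
  have hprod := Real.rexp_tsum_eq_tprod (ι := ℕ)
    (f := fun j => (1 - q ^ (j+1)) / (1 - q ^ ((j:ℝ) + (x+1))))
    (fun j => div_pos (hnum j) (hden j)) hslog
  have hprod' : ∏' j : ℕ, (1 - q ^ (j+1)) / (1 - q ^ ((j:ℝ) + (x+1)))
      = Real.exp (∑' j : ℕ, Real.log ((1 - q ^ (j+1)) / (1 - q ^ ((j:ℝ) + (x+1))))) := by
    have := hprod
    simpa using this.symm
  have htsum : ∑' j : ℕ, Real.log ((1 - q ^ (j+1)) / (1 - q ^ ((j:ℝ) + (x+1))))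
      = (∑' m : ℕ, Ac q m * Ec q m x) - T0 q := by
    rw [tsum_congr hlog, Summable.tsum_sub hs1 hs2]
    congr 1
    · rw [(tsum_ell_swap hq0 hq1 (show (0:ℝ) < x + 1 by linarith)).2]
      apply tsum_congr
      intro m
      rw [Ac, Ec]
      have : q ^ ((x+1) * ((m:ℝ)+1)) = q ^ (x * ((m:ℝ)+1)) * q ^ (m+1) := by
        rw [show (x+1) * ((m:ℝ)+1) = x * ((m:ℝ)+1) + ((m:ℝ)+1) by ring, Real.rpow_add hq0,
          show ((m:ℝ)+1) = ((m+1:ℕ):ℝ) by push_cast; ring, Real.rpow_natCast]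
      rw [this]
      ring
  have hpre : (1 - q) ^ (1 - (x+1)) = Real.exp (-(x * Real.log (1-q))) := by
    rw [Real.rpow_def_of_pos h1q]
    congr 1
    ring
  rw [qGamma, hpre, hprod', htsum, ← Real.exp_add]

include hq0 hq1 in
lemma qGamma_pos {x : ℝ} (hx : 0 < x) : 0 < qGamma q (x + 1) := by
  rw [qGamma_eq hq0 hq1 hx]; exact Real.exp_pos _

include hq0 hq1 in
lemma log_one_sub_qy {y : ℝ} (hy : 0 < y) :
    Real.log (1 - q ^ y) = -(2 * ∑' m : ℕ, Hc m * Ec q m y) := by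
  obtain ⟨h0, h1⟩ := qy_mem hq0 hq1 hy
  have h := (hasSum_neg_log h0.le h1).tsum_eq
  have h2 : ∑' m : ℕ, Hc m * Ec q m y = (1/2) * ∑' m : ℕ, (q^y)^(m+1)/((m:ℝ)+1) := by
    rw [← tsum_mul_left]
    apply tsum_congr
    intro m
    rw [Hc, Ec_eq_pow hq0]
    have hm : (0:ℝ) < (m:ℝ)+1 := by positivity
    field_simp
  rw [h2, h]
  ring

include hq0 hq1 in
lemma dilog_qy_eq {y : ℝ} (hy : 0 < y) :
    dilog (1 - q ^ y) = Phi (1/2) - (y * Real.log q) * Real.log (1 - q ^ y)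
      - (-Real.log q) * ∑' m : ℕ, Bc q m * Ec q m y := by
  obtain ⟨h0, h1⟩ := qy_mem hq0 hq1 hy
  have hu : 0 < -Real.log q := by
    have := Real.log_neg hq0 hq1; linarith
  have hrefl := dilog_reflection h0 h1
  have hlog : Real.log (q ^ y) = y * Real.log q := Real.log_rpow hq0 y
  have hlogne : Real.log q ≠ 0 := by
    have := Real.log_neg hq0 hq1; linarith
  have hdil : dilog (q ^ y) = (-Real.log q) * ∑' m : ℕ, Bc q m * Ec q m y := by
    rw [← (hasSum_dilog h0.le h1).tsum_eq, ← tsum_mul_left]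
    apply tsum_congr
    intro m
    rw [Bc, Ec_eq_pow hq0]
    have hm : ((m:ℝ)+1) ≠ 0 := by positivity
    field_simp
  rw [hrefl, hlog, hdil]

end Fixedq


lemma core {q : ℝ} (hq0 : 0 < q) (hq1 : q < 1) {n : ℕ} (x p : Fin n → ℝ)
    (hx : ∀ k, 0 < x k) (hp : ∀ k, 0 ≤ p k) (hps : ∑ k, p k = 1)
    (c : ℕ → ℝ) (hc0 : ∀ m, 0 ≤ c m)
    (hsum : ∀ y : ℝ, 0 < y → Summable fun m => c m * Ec q m y)
    (hS : 0 < ∑ k, p k * x k) :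
    ∑' m : ℕ, c m * Ec q m (∑ k, p k * x k)
      ≤ ∑ k, p k * ∑' m : ℕ, c m * Ec q m (x k) := by
  set S := ∑ k, p k * x k with hSdef
  have hjen : ∀ m : ℕ, Ec q m S ≤ ∑ k, p k * Ec q m (x k) := by
    intro m
    set M : ℝ := (m:ℝ) + 1 with hM
    have hj := convexOn_exp.map_sum_le (t := Finset.univ) (w := p)
      (p := fun k => Real.log q * (x k * M))
      (f := Real.exp) (fun k _ => hp k) hps (fun k _ => Set.mem_univ _)
    have e1 : ∑ k, p k • (Real.log q * (x k * M)) = Real.log q * (S * M) := by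
      rw [Finset.sum_congr rfl
        (fun k _ => (by simp only [smul_eq_mul]; ring :
          p k • (Real.log q * (x k * M)) = (Real.log q * M) * (p k * x k)))]
      rw [← Finset.mul_sum, ← hSdef]
      ring
    rw [e1] at hj
    have e2 : Ec q m S = Real.exp (Real.log q * (S * M)) := by
      rw [Ec, Real.rpow_def_of_pos hq0, hM]
    rw [e2]
    refine hj.trans (le_of_eq ?_)
    apply Finset.sum_congr rfl
    intro k _
    rw [smul_eq_mul, Ec, Real.rpow_def_of_pos hq0, hM]
  have hsum2 : ∀ k : Fin n, Summable fun m => p k * (c m * Ec q m (x k)) :=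
    fun k => (hsum (x k) (hx k)).mul_left (p k)
  have hsumR : Summable fun m => ∑ k, p k * (c m * Ec q m (x k)) :=
    summable_sum (fun k _ => hsum2 k)
  have hstep : ∑' m : ℕ, c m * Ec q m S
      ≤ ∑' m : ℕ, ∑ k, p k * (c m * Ec q m (x k)) := by
    apply Summable.tsum_le_tsum _ (hsum S hS) hsumR
    intro m
    calc c m * Ec q m S ≤ c m * ∑ k, p k * Ec q m (x k) :=
          mul_le_mul_of_nonneg_left (hjen m) (hc0 m)
      _ = ∑ k, p k * (c m * Ec q m (x k)) := by
          rw [Finset.mul_sum]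
          exact Finset.sum_congr rfl (fun k _ => by ring)
  refine hstep.trans (le_of_eq ?_)
  rw [Summable.tsum_finsetSum (fun k _ => hsum2 k)]
  exact Finset.sum_congr rfl (fun k _ => tsum_mul_left)



section Fixedq
variable {q : ℝ} (hq0 : 0 < q) (hq1 : q < 1)

include hq0 hq1 in
lemma Lf_eq {y : ℝ} (hy : 0 < y) :
    Real.log ((1 - q ^ y) / (1 - q)) * y + dilog (1 - q ^ y) / Real.log q
      = -(y * Real.log (1 - q)) + Phi (1/2) / Real.log q
        + ∑' m : ℕ, Bc q m * Ec q m y := by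
  have h1q : (0:ℝ) < 1 - q := by linarith
  obtain ⟨h0, h1⟩ := qy_mem hq0 hq1 hy
  have hne : (1 - q ^ y) ≠ 0 := by linarith
  have hLqne : Real.log q ≠ 0 := by
    have := Real.log_neg hq0 hq1; linarith
  rw [Real.log_div hne h1q.ne', dilog_qy_eq hq0 hq1 hy]
  field_simp
  ring

include hq0 hq1 in
lemma Lf2_eq {y : ℝ} (hy : 0 < y) :
    Real.log ((1 - q ^ y) / (1 - q)) * (y + 1/2) + dilog (1 - q ^ y) / Real.log q
      = -(y * Real.log (1 - q)) - (1/2) * Real.log (1 - q) + Phi (1/2) / Real.log q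
        + ∑' m : ℕ, Bc q m * Ec q m y - ∑' m : ℕ, Hc m * Ec q m y := by
  have h1q : (0:ℝ) < 1 - q := by linarith
  obtain ⟨h0, h1⟩ := qy_mem hq0 hq1 hy
  have hne : (1 - q ^ y) ≠ 0 := by linarith
  have hLqne : Real.log q ≠ 0 := by
    have := Real.log_neg hq0 hq1; linarith
  rw [Real.log_div hne h1q.ne', dilog_qy_eq hq0 hq1 hy, log_one_sub_qy hq0 hq1 hy]
  field_simp
  ring

end Fixedq

end QJ

open QJ

/-- Two-sided Jensen-type inequality for `Γ_q(·+1)`: for `0 < q < 1`, weights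
`p k ≥ 0` summing to `1` and points `x k > 0`, with `S = Σ p k * x k` and
`E = exp((Li₂(1−q^S) − Σ p k Li₂(1−q^(x k)))/log q)`,
`[((1−q^S)/(1−q))^S / ∏ ((1−q^(x k))/(1−q))^(p k x k)]·E ≤ Γ_q(S+1)/∏ Γ_q(x k+1)^(p k)
≤ [((1−q^S)/(1−q))^(S+1/2) / ∏ ((1−q^(x k))/(1−q))^(p k (x k+1/2))]·E`. -/
theorem qGamma_jensen_two_sided (q : ℝ) (hq0 : 0 < q) (hq1 : q < 1)
    (n : ℕ) (hn : 1 ≤ n) (x p : Fin n → ℝ)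
    (hx : ∀ k, 0 < x k) (hp : ∀ k, 0 ≤ p k) (hps : ∑ k, p k = 1) :
    (((1 - q ^ (∑ k, p k * x k)) / (1 - q)) ^ (∑ k, p k * x k) /
          ∏ k, ((1 - q ^ (x k)) / (1 - q)) ^ (p k * x k)) *
        Real.exp ((dilog (1 - q ^ (∑ k, p k * x k)) - ∑ k, p k * dilog (1 - q ^ (x k))) /
          Real.log q)
      ≤ qGamma q ((∑ k, p k * x k) + 1) / ∏ k, (qGamma q (x k + 1)) ^ (p k) ∧
    qGamma q ((∑ k, p k * x k) + 1) / ∏ k, (qGamma q (x k + 1)) ^ (p k)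
      ≤ (((1 - q ^ (∑ k, p k * x k)) / (1 - q)) ^ ((∑ k, p k * x k) + 1 / 2) /
          ∏ k, ((1 - q ^ (x k)) / (1 - q)) ^ (p k * (x k + 1 / 2))) *
        Real.exp ((dilog (1 - q ^ (∑ k, p k * x k)) - ∑ k, p k * dilog (1 - q ^ (x k))) /
          Real.log q) := by
  have h1q : (0:ℝ) < 1 - q := by linarith
  have hLq : Real.log q < 0 := Real.log_neg hq0 hq1
  have hLqne : Real.log q ≠ 0 := ne_of_lt hLq
  set S := ∑ k, p k * x k with hSdef
  have hS : 0 < S := by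
    have hsum_ne : ∑ k, p k ≠ 0 := by rw [hps]; norm_num
    obtain ⟨k, -, hk⟩ := Finset.exists_ne_zero_of_sum_ne_zero hsum_ne
    have hpk : 0 < p k := lt_of_le_of_ne (hp k) (Ne.symm hk)
    calc (0:ℝ) < p k * x k := mul_pos hpk (hx k)
      _ ≤ S := Finset.single_le_sum
          (fun i _ => mul_nonneg (hp i) (hx i).le) (Finset.mem_univ k)
  have hR : ∀ y : ℝ, 0 < y → 0 < (1 - q ^ y) / (1 - q) := fun y hy => by
    have := (qy_mem hq0 hq1 hy).2
    exact div_pos (by linarith) h1q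
  -- middle expressed as exp
  have hMid : qGamma q (S + 1) / ∏ k, (qGamma q (x k + 1)) ^ (p k)
      = Real.exp ((-(S * Real.log (1-q)) + ((∑' m : ℕ, Ac q m * Ec q m S) - T0 q))
          - ∑ k, p k * (-(x k * Real.log (1-q))
              + ((∑' m : ℕ, Ac q m * Ec q m (x k)) - T0 q))) := by
    rw [qGamma_eq hq0 hq1 hS]
    have h1 : ∀ k : Fin n, (qGamma q (x k + 1)) ^ (p k)
        = Real.exp (p k * (-(x k * Real.log (1-q))
            + ((∑' m : ℕ, Ac q m * Ec q m (x k)) - T0 q))) := by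
      intro k
      rw [qGamma_eq hq0 hq1 (hx k), ← Real.exp_mul, mul_comm]
    rw [Finset.prod_congr rfl (fun k _ => h1 k), ← Real.exp_sum, ← Real.exp_sub]
  -- LHS expressed as exp
  have hLHSeq : (((1 - q ^ S) / (1 - q)) ^ S /
          ∏ k, ((1 - q ^ (x k)) / (1 - q)) ^ (p k * x k)) *
        Real.exp ((dilog (1 - q ^ S) - ∑ k, p k * dilog (1 - q ^ (x k))) / Real.log q)
      = Real.exp ((Real.log ((1 - q ^ S)/(1-q)) * S + dilog (1 - q ^ S) / Real.log q)
          - ∑ k, p k * (Real.log ((1 - q ^ (x k))/(1-q)) * (x k)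
            + dilog (1 - q ^ (x k)) / Real.log q)) := by
    rw [Real.rpow_def_of_pos (hR S hS)]
    have hprod : ∏ k, ((1 - q ^ (x k)) / (1 - q)) ^ (p k * x k)
        = Real.exp (∑ k, Real.log ((1 - q ^ (x k))/(1-q)) * (p k * x k)) := by
      rw [Real.exp_sum]
      exact Finset.prod_congr rfl
        (fun k _ => by rw [Real.rpow_def_of_pos (hR (x k) (hx k))])
    rw [hprod, ← Real.exp_sub, ← Real.exp_add]
    congr 1
    have e : ∑ k, p k * (Real.log ((1 - q ^ (x k))/(1-q)) * (x k)
          + dilog (1 - q ^ (x k)) / Real.log q)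
        = ∑ k, Real.log ((1 - q ^ (x k))/(1-q)) * (p k * x k)
          + (∑ k, p k * dilog (1 - q ^ (x k))) / Real.log q := by
      rw [Finset.sum_div, ← Finset.sum_add_distrib]
      exact Finset.sum_congr rfl (fun k _ => by ring)
    rw [e, sub_div]
    ring
  -- RHS expressed as exp
  have hRHSeq : (((1 - q ^ S) / (1 - q)) ^ (S + 1/2) /
          ∏ k, ((1 - q ^ (x k)) / (1 - q)) ^ (p k * (x k + 1/2))) *
        Real.exp ((dilog (1 - q ^ S) - ∑ k, p k * dilog (1 - q ^ (x k))) / Real.log q)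
      = Real.exp ((Real.log ((1 - q ^ S)/(1-q)) * (S + 1/2) + dilog (1 - q ^ S) / Real.log q)
          - ∑ k, p k * (Real.log ((1 - q ^ (x k))/(1-q)) * (x k + 1/2)
            + dilog (1 - q ^ (x k)) / Real.log q)) := by
    rw [Real.rpow_def_of_pos (hR S hS)]
    have hprod : ∏ k, ((1 - q ^ (x k)) / (1 - q)) ^ (p k * (x k + 1/2))
        = Real.exp (∑ k, Real.log ((1 - q ^ (x k))/(1-q)) * (p k * (x k + 1/2))) := by
      rw [Real.exp_sum]
      exact Finset.prod_congr rfl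
        (fun k _ => by rw [Real.rpow_def_of_pos (hR (x k) (hx k))])
    rw [hprod, ← Real.exp_sub, ← Real.exp_add]
    congr 1
    have e : ∑ k, p k * (Real.log ((1 - q ^ (x k))/(1-q)) * (x k + 1/2)
          + dilog (1 - q ^ (x k)) / Real.log q)
        = ∑ k, Real.log ((1 - q ^ (x k))/(1-q)) * (p k * (x k + 1/2))
          + (∑ k, p k * dilog (1 - q ^ (x k))) / Real.log q := by
      rw [Finset.sum_div, ← Finset.sum_add_distrib]
      exact Finset.sum_congr rfl (fun k _ => by ring)
    rw [e, sub_div]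
    ring
  -- sum splittings
  have hsplitG : ∑ k, p k * (-(x k * Real.log (1-q))
        + ((∑' m : ℕ, Ac q m * Ec q m (x k)) - T0 q))
      = -(S * Real.log (1-q)) + ∑ k, p k * ∑' m : ℕ, Ac q m * Ec q m (x k) - T0 q := by
    rw [Finset.sum_congr rfl (fun k _ => (by ring :
      p k * (-(x k * Real.log (1-q)) + ((∑' m : ℕ, Ac q m * Ec q m (x k)) - T0 q))
        = (p k * x k) * (-(Real.log (1-q)))
          + (p k * ∑' m : ℕ, Ac q m * Ec q m (x k) + p k * (-(T0 q)))))]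
    rw [Finset.sum_add_distrib, Finset.sum_add_distrib, ← Finset.sum_mul, ← Finset.sum_mul,
      ← hSdef, hps]
    ring
  have hsplitL : ∑ k, p k * (-(x k * Real.log (1-q)) + Phi (1/2) / Real.log q
        + ∑' m : ℕ, Bc q m * Ec q m (x k))
      = -(S * Real.log (1-q)) + Phi (1/2) / Real.log q
        + ∑ k, p k * ∑' m : ℕ, Bc q m * Ec q m (x k) := by
    rw [Finset.sum_congr rfl (fun k _ => (by ring :
      p k * (-(x k * Real.log (1-q)) + Phi (1/2) / Real.log q
          + ∑' m : ℕ, Bc q m * Ec q m (x k))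
        = (p k * x k) * (-(Real.log (1-q))) + (p k * (Phi (1/2) / Real.log q)
            + p k * ∑' m : ℕ, Bc q m * Ec q m (x k))))]
    rw [Finset.sum_add_distrib, Finset.sum_add_distrib, ← Finset.sum_mul, ← Finset.sum_mul,
      ← hSdef, hps]
    ring
  have hsplitL2 : ∑ k, p k * (-(x k * Real.log (1-q)) - (1/2) * Real.log (1-q)
        + Phi (1/2) / Real.log q + ∑' m : ℕ, Bc q m * Ec q m (x k)
        - ∑' m : ℕ, Hc m * Ec q m (x k))
      = -(S * Real.log (1-q)) - (1/2) * Real.log (1-q) + Phi (1/2) / Real.log q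
        + ∑ k, p k * ∑' m : ℕ, Bc q m * Ec q m (x k)
        - ∑ k, p k * ∑' m : ℕ, Hc m * Ec q m (x k) := by
    rw [Finset.sum_congr rfl (fun k _ => (by ring :
      p k * (-(x k * Real.log (1-q)) - (1/2) * Real.log (1-q)
          + Phi (1/2) / Real.log q + ∑' m : ℕ, Bc q m * Ec q m (x k)
          - ∑' m : ℕ, Hc m * Ec q m (x k))
        = (p k * x k) * (-(Real.log (1-q)))
          + (p k * (-(1/2) * Real.log (1-q) + Phi (1/2) / Real.log q)
            + (p k * ∑' m : ℕ, Bc q m * Ec q m (x k)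
              - p k * ∑' m : ℕ, Hc m * Ec q m (x k)))))]
    rw [Finset.sum_add_distrib, Finset.sum_add_distrib, Finset.sum_sub_distrib,
      ← Finset.sum_mul, ← Finset.sum_mul, ← hSdef, hps]
    ring
  -- expansions of combined tsums
  have hexp1 : ∀ y : ℝ, 0 < y → ∑' m : ℕ, (Bc q m - Ac q m) * Ec q m y
      = (∑' m : ℕ, Bc q m * Ec q m y) - ∑' m : ℕ, Ac q m * Ec q m y := by
    intro y hy
    rw [← Summable.tsum_sub (summable_BEc hq0 hq1 hy) (summable_AEc hq0 hq1 hy.le)]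
    exact tsum_congr (fun m => by ring)
  have hexp2 : ∀ y : ℝ, 0 < y → ∑' m : ℕ, (Ac q m - Bc q m + Hc m) * Ec q m y
      = (∑' m : ℕ, Ac q m * Ec q m y) - (∑' m : ℕ, Bc q m * Ec q m y)
        + ∑' m : ℕ, Hc m * Ec q m y := by
    intro y hy
    calc ∑' m : ℕ, (Ac q m - Bc q m + Hc m) * Ec q m y
        = ∑' m : ℕ, ((Ac q m * Ec q m y - Bc q m * Ec q m y) + Hc m * Ec q m y) :=
          tsum_congr (fun m => by ring)
      _ = (∑' m : ℕ, (Ac q m * Ec q m y - Bc q m * Ec q m y))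
            + ∑' m : ℕ, Hc m * Ec q m y :=
          Summable.tsum_add ((summable_AEc hq0 hq1 hy.le).sub (summable_BEc hq0 hq1 hy))
            (summable_HEc hq0 hq1 hy)
      _ = (∑' m : ℕ, Ac q m * Ec q m y) - (∑' m : ℕ, Bc q m * Ec q m y)
            + ∑' m : ℕ, Hc m * Ec q m y := by
          rw [Summable.tsum_sub (summable_AEc hq0 hq1 hy.le) (summable_BEc hq0 hq1 hy)]
  -- core inequalities
  have hcore1 : (∑' m : ℕ, Bc q m * Ec q m S) - (∑' m : ℕ, Ac q m * Ec q m S)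
      ≤ ∑ k, p k * ((∑' m : ℕ, Bc q m * Ec q m (x k))
          - ∑' m : ℕ, Ac q m * Ec q m (x k)) := by
    have hsum1 : ∀ y : ℝ, 0 < y → Summable fun m => (Bc q m - Ac q m) * Ec q m y := by
      intro y hy
      apply ((summable_BEc hq0 hq1 hy).sub (summable_AEc hq0 hq1 hy.le)).congr
      intro m; ring
    have h := core hq0 hq1 x p hx hp hps (fun m => Bc q m - Ac q m)
      (fun m => sub_nonneg.2 (Ac_le_Bc hq0 hq1 m)) hsum1 (by rw [← hSdef]; exact hS)
    rw [← hSdef] at h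
    rw [hexp1 S hS] at h
    refine h.trans (le_of_eq ?_)
    exact Finset.sum_congr rfl (fun k _ => by rw [hexp1 (x k) (hx k)])
  have hcore2 : (∑' m : ℕ, Ac q m * Ec q m S) - (∑' m : ℕ, Bc q m * Ec q m S)
        + (∑' m : ℕ, Hc m * Ec q m S)
      ≤ ∑ k, p k * ((∑' m : ℕ, Ac q m * Ec q m (x k))
          - (∑' m : ℕ, Bc q m * Ec q m (x k)) + ∑' m : ℕ, Hc m * Ec q m (x k)) := by
    have hsum2 : ∀ y : ℝ, 0 < y → Summable fun m => (Ac q m - Bc q m + Hc m) * Ec q m y := by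
      intro y hy
      apply (((summable_AEc hq0 hq1 hy.le).sub (summable_BEc hq0 hq1 hy)).add
        (summable_HEc hq0 hq1 hy)).congr
      intro m; ring
    have h := core hq0 hq1 x p hx hp hps (fun m => Ac q m - Bc q m + Hc m)
      (fun m => by
        have := Bc_le_Ac_add_Hc hq0 hq1 m
        show (0:ℝ) ≤ Ac q m - Bc q m + Hc m
        linarith) hsum2 (by rw [← hSdef]; exact hS)
    rw [← hSdef] at h
    rw [hexp2 S hS] at h
    refine h.trans (le_of_eq ?_)
    exact Finset.sum_congr rfl (fun k _ => by rw [hexp2 (x k) (hx k)])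
  have hsplit_sub : ∑ k, p k * ((∑' m : ℕ, Bc q m * Ec q m (x k))
        - ∑' m : ℕ, Ac q m * Ec q m (x k))
      = ∑ k, p k * ∑' m : ℕ, Bc q m * Ec q m (x k)
        - ∑ k, p k * ∑' m : ℕ, Ac q m * Ec q m (x k) := by
    rw [← Finset.sum_sub_distrib]
    exact Finset.sum_congr rfl (fun k _ => by ring)
  have hsplit_sub2 : ∑ k, p k * ((∑' m : ℕ, Ac q m * Ec q m (x k))
        - (∑' m : ℕ, Bc q m * Ec q m (x k)) + ∑' m : ℕ, Hc m * Ec q m (x k))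
      = ∑ k, p k * ∑' m : ℕ, Ac q m * Ec q m (x k)
        - ∑ k, p k * ∑' m : ℕ, Bc q m * Ec q m (x k)
        + ∑ k, p k * ∑' m : ℕ, Hc m * Ec q m (x k) := by
    rw [← Finset.sum_sub_distrib, ← Finset.sum_add_distrib]
    exact Finset.sum_congr rfl (fun k _ => by ring)
  rw [hsplit_sub] at hcore1
  rw [hsplit_sub2] at hcore2
  have hLfsum : ∑ k, p k * (Real.log ((1 - q ^ (x k))/(1-q)) * (x k)
        + dilog (1 - q ^ (x k)) / Real.log q)
      = ∑ k, p k * (-(x k * Real.log (1-q)) + Phi (1/2) / Real.log q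
          + ∑' m : ℕ, Bc q m * Ec q m (x k)) :=
    Finset.sum_congr rfl (fun k _ => by rw [Lf_eq hq0 hq1 (hx k)])
  have hLfsum2 : ∑ k, p k * (Real.log ((1 - q ^ (x k))/(1-q)) * (x k + 1/2)
        + dilog (1 - q ^ (x k)) / Real.log q)
      = ∑ k, p k * (-(x k * Real.log (1-q)) - (1/2) * Real.log (1-q)
          + Phi (1/2) / Real.log q + ∑' m : ℕ, Bc q m * Ec q m (x k)
          - ∑' m : ℕ, Hc m * Ec q m (x k)) :=
    Finset.sum_congr rfl (fun k _ => by rw [Lf2_eq hq0 hq1 (hx k)])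
  constructor
  · rw [hLHSeq, hMid, Real.exp_le_exp]
    rw [Lf_eq hq0 hq1 hS, hLfsum, hsplitL, hsplitG]
    linarith
  · rw [hRHSeq, hMid, Real.exp_le_exp]
    rw [Lf2_eq hq0 hq1 hS, hLfsum2, hsplitL2, hsplitG]
    linarith
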